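/- Let 𝒢* be an AMP essential graph with strong-equivalence classes Σ, and let the reduced graph over Σ have an arrow α→β iff some a∈α, b∈β has a→b in 𝒢*, and a line α−β iff some a∈α, b∈β has a (necessarily weak) line a−b in 𝒢*. Then the reduced graph of 𝒢* contains no flags (no induced subgraph α→β−γ with α,γ nonadjacent) and no chordless undirected cycles of length ≥ 4. -/

import Mathlib

/-- A mixed graph: directed edges (arrows) and undirected edges (lines),
no loops, at most one edge between any two vertices. -/
structure MixedGraph (V : Type) where
  arrow : V → V → Prop
  line : V → V → Prop
  line_symm : ∀ a b, line a b → line b a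
  arrow_irrefl : ∀ a, ¬ arrow a a
  line_irrefl : ∀ a, ¬ line a a
  not_arrow_line : ∀ a b, arrow a b → ¬ line a b
  not_arrow_arrow : ∀ a b, arrow a b → ¬ arrow b a

namespace MixedGraph

variable {V : Type}

/-- `a` and `b` are adjacent (joined by some edge). -/
def adj (G : MixedGraph V) (a b : V) : Prop := G.arrow a b ∨ G.arrow b a ∨ G.line a b

/-- A step of a semi-directed path: a forward arrow or a line. -/
def step (G : MixedGraph V) (a b : V) : Prop := G.arrow a b ∨ G.line a b

/-- A semi-directed cycle of length `k ≥ 3`: `v 0, …, v k` with `v k = v 0`,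
each step an arrow or a line, at least one arrow, vertices distinct. -/
def IsSemiDirectedCycle (G : MixedGraph V) (k : ℕ) (v : ℕ → V) : Prop :=
  3 ≤ k ∧ v k = v 0 ∧ (∀ i, i < k → G.step (v i) (v (i + 1))) ∧
    (∃ i, i < k ∧ G.arrow (v i) (v (i + 1))) ∧
    (∀ i j, i < j → j < k → v i ≠ v j)

/-- A chain graph is a mixed graph with no semi-directed cycle. -/
def IsChainGraph (G : MixedGraph V) : Prop := ∀ k v, ¬ G.IsSemiDirectedCycle k v

/-- A triplex `({a,c}, b)`: `a, c` nonadjacent and the induced subgraph on `{a,b,c}`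
is `a→b←c`, `a→b−c`, or `a−b←c`. -/
def triplex (G : MixedGraph V) (a b c : V) : Prop :=
  a ≠ c ∧ ¬ G.adj a c ∧
    ((G.arrow a b ∧ G.arrow c b) ∨ (G.arrow a b ∧ G.line b c) ∨ (G.line a b ∧ G.arrow c b))

def sameSkeleton (G H : MixedGraph V) : Prop := ∀ a b, G.adj a b ↔ H.adj a b

def sameTriplexes (G H : MixedGraph V) : Prop := ∀ a b c, G.triplex a b c ↔ H.triplex a b c

end MixedGraph

/-- The AMP Markov equivalence class of a chain graph `G0`: all chain graphs with the
same skeleton and the same triplexes as `G0`. -/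
def AMPClass {V : Type} (G0 : MixedGraph V) : Set (MixedGraph V) :=
  {G | G.IsChainGraph ∧ G.sameSkeleton G0 ∧ G.sameTriplexes G0}

/-- `E` is the AMP essential graph of the class of `G0`: same skeleton; `a→b` is an arrow
of `E` iff it occurs in some member and its reversal in none; all other edges are lines. -/
def IsEssentialGraph {V : Type} (G0 E : MixedGraph V) : Prop :=
  E.sameSkeleton G0 ∧
    (∀ a b, E.arrow a b ↔
      (∃ G ∈ AMPClass G0, G.arrow a b) ∧ ∀ G ∈ AMPClass G0, ¬ G.arrow b a) ∧
    (∀ a b, E.line a b ↔ G0.adj a b ∧ ¬ E.arrow a b ∧ ¬ E.arrow b a)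

/-- A line of the essential graph is strong if it occurs as a line in every member. -/
def StrongLine {V : Type} (G0 E : MixedGraph V) (a b : V) : Prop :=
  E.line a b ∧ ∀ G ∈ AMPClass G0, G.line a b

/-- A line of the essential graph is weak if both orientations occur among members. -/
def WeakLine {V : Type} (G0 E : MixedGraph V) (a b : V) : Prop :=
  E.line a b ∧ (∃ G ∈ AMPClass G0, G.arrow a b) ∧ (∃ G ∈ AMPClass G0, G.arrow b a)

/-- An arrow of the essential graph is strong if it occurs as an arrow in every member. -/
def StrongArrow {V : Type} (G0 E : MixedGraph V) (a b : V) : Prop :=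
  E.arrow a b ∧ ∀ G ∈ AMPClass G0, G.arrow a b

/-- Two vertices are strongly equivalent if joined by a path of strong lines. -/
def StronglyEquiv {V : Type} (G0 E : MixedGraph V) (x y : V) : Prop :=
  Relation.ReflTransGen (StrongLine G0 E) x y

/-- Arrow between strong-equivalence classes of the reduced graph: the class of `x`
points to the class of `y` iff some representatives are joined by an arrow of `E`. -/
def RArrow {V : Type} (G0 E : MixedGraph V) (x y : V) : Prop :=
  ∃ a b, StronglyEquiv G0 E x a ∧ StronglyEquiv G0 E y b ∧ E.arrow a b

/-- Line between distinct strong-equivalence classes of the reduced graph: some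
representatives are joined by a (necessarily weak) line of `E`. -/
def RLine {V : Type} (G0 E : MixedGraph V) (x y : V) : Prop :=
  ¬ StronglyEquiv G0 E x y ∧
    ∃ a b, StronglyEquiv G0 E x a ∧ StronglyEquiv G0 E y b ∧ E.line a b

/-- Adjacency of strong-equivalence classes in the reduced graph. -/
def RAdj {V : Type} (G0 E : MixedGraph V) (x y : V) : Prop :=
  RArrow G0 E x y ∨ RArrow G0 E y x ∨ RLine G0 E x y


section Aux

variable {V : Type} {G0 E : MixedGraph V}

lemma strongLine_symm {a b : V} (h : StrongLine G0 E a b) : StrongLine G0 E b a :=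
  ⟨E.line_symm _ _ h.1, fun G hG => G.line_symm _ _ (h.2 G hG)⟩

lemma sequiv_symm {a b : V} (h : StronglyEquiv G0 E a b) : StronglyEquiv G0 E b a := by
  induction h with
  | refl => exact Relation.ReflTransGen.refl
  | tail _ hstep ih => exact Relation.ReflTransGen.head (strongLine_symm hstep) ih

lemma sequiv_trans {a b c : V} (h1 : StronglyEquiv G0 E a b) (h2 : StronglyEquiv G0 E b c) :
    StronglyEquiv G0 E a c := Relation.ReflTransGen.trans h1 h2

lemma mem_adj {G : MixedGraph V} (hE : IsEssentialGraph G0 E) (hG : G ∈ AMPClass G0)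
    {a b : V} : G.adj a b ↔ E.adj a b := by
  rw [hG.2.1 a b, hE.1 a b]

lemma mem_triplex {G G' : MixedGraph V} (hG : G ∈ AMPClass G0) (hG' : G' ∈ AMPClass G0)
    {a b c : V} : G.triplex a b c ↔ G'.triplex a b c :=
  (hG.2.2 a b c).trans (hG'.2.2 a b c).symm

lemma arrow_no_triplex {G : MixedGraph V} {a b c : V} (h : G.arrow b c) :
    ¬ G.triplex a b c := by
  rintro ⟨-, -, ⟨-, h2⟩ | ⟨-, h2⟩ | ⟨-, h2⟩⟩
  · exact G.not_arrow_arrow b c h h2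
  · exact G.not_arrow_line b c h h2
  · exact G.not_arrow_arrow b c h h2

lemma weak_of_line (hE : IsEssentialGraph G0 E) {a b : V} (hl : E.line a b)
    (hne : ¬ StronglyEquiv G0 E a b) :
    (∃ G ∈ AMPClass G0, G.arrow a b) ∧ (∃ G ∈ AMPClass G0, G.arrow b a) := by
  have hadj : E.adj a b := Or.inr (Or.inr hl)
  have hnEab : ¬ E.arrow a b := fun h => E.not_arrow_line a b h hl
  have hnEba : ¬ E.arrow b a := fun h => E.not_arrow_line b a h (E.line_symm a b hl)
  have hnot : ¬ ∀ G ∈ AMPClass G0, G.line a b := by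
    intro hall
    exact hne (Relation.ReflTransGen.single ⟨hl, hall⟩)
  push_neg at hnot
  obtain ⟨G, hG, hGl⟩ := hnot
  have hGadj : G.adj a b := (mem_adj hE hG).2 hadj
  have key : ∀ c d : V, (∃ G ∈ AMPClass G0, G.arrow c d) → ¬ E.arrow c d →
      ∃ G ∈ AMPClass G0, G.arrow d c := by
    intro c d hex hne'
    by_contra hno
    push_neg at hno
    exact hne' ((hE.2.1 c d).2 ⟨hex, hno⟩)
  rcases hGadj with h | h | h
  · exact ⟨⟨G, hG, h⟩, key a b ⟨G, hG, h⟩ hnEab⟩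
  · exact ⟨key b a ⟨G, hG, h⟩ hnEba, ⟨G, hG, h⟩⟩
  · exact absurd h hGl

lemma no3cycle {G : MixedGraph V} (hG : G.IsChainGraph) {x y z : V}
    (s1 : G.step x y) (s2 : G.arrow y z) (s3 : G.step z x)
    (hxy : x ≠ y) (hyz : y ≠ z) (hxz : x ≠ z) : False := by
  apply hG 3 (fun i => if i = 1 then y else if i = 2 then z else x)
  refine ⟨le_refl 3, by norm_num, ?_, ⟨1, by norm_num, by simpa using s2⟩, ?_⟩
  · intro i hi
    interval_cases i
    · simpa using s1
    · have hs : G.step y z := Or.inl s2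
      simpa using hs
    · simpa using s3
  · intro i j hij hj
    interval_cases j <;> interval_cases i <;> simp_all

lemma arrow_no_triplex' {G : MixedGraph V} {a b c : V} (h : G.arrow b a) :
    ¬ G.triplex a b c := by
  rintro ⟨-, -, ⟨h2, -⟩ | ⟨h2, -⟩ | ⟨h2, -⟩⟩
  · exact G.not_arrow_arrow b a h h2
  · exact G.not_arrow_arrow b a h h2
  · exact G.not_arrow_line b a h (G.line_symm a b h2)

lemma lineS (hE : IsEssentialGraph G0 E) {v v' c : V}
    (hvc : E.line v c) (hne : ¬ StronglyEquiv G0 E v c)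
    (hs : StrongLine G0 E v v') (hcv' : c ≠ v') : E.line v' c := by
  obtain ⟨⟨G1, hG1, h1⟩, ⟨G2, hG2, h2⟩⟩ := weak_of_line hE hvc hne
  have hvv' : v ≠ v' := fun h => E.line_irrefl v (h ▸ hs.1)
  have hvcne : v ≠ c := fun h => E.line_irrefl v (h ▸ hvc)
  have hadj : E.adj c v' := by
    by_contra hna
    have t2 : G2.triplex c v v' :=
      ⟨hcv', fun h => hna ((mem_adj hE hG2).1 h), Or.inr (Or.inl ⟨h2, hs.2 G2 hG2⟩)⟩
    exact arrow_no_triplex' h1 ((mem_triplex hG2 hG1).1 t2)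
  rcases hadj with h | h | h
  · -- E.arrow c v' : semidirected 3-cycle in G1
    have hno : ∀ G ∈ AMPClass G0, ¬ G.arrow v' c := ((hE.2.1 c v').1 h).2
    have hadj1 : G1.adj c v' := (mem_adj hE hG1).2 (Or.inl h)
    have hstep : G1.step c v' := by
      rcases hadj1 with h' | h' | h'
      · exact Or.inl h'
      · exact absurd h' (hno G1 hG1)
      · exact Or.inr h'
    exact (no3cycle hG1.1 (Or.inr (G1.line_symm v v' (hs.2 G1 hG1))) h1 hstep
      hvv'.symm hvcne hcv'.symm).elim
  · -- E.arrow v' c : semidirected 3-cycle in G2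
    have hno : ∀ G ∈ AMPClass G0, ¬ G.arrow c v' := ((hE.2.1 v' c).1 h).2
    have hadj2 : G2.adj v' c := (mem_adj hE hG2).2 (Or.inl h)
    have hstep : G2.step v' c := by
      rcases hadj2 with h' | h' | h'
      · exact Or.inl h'
      · exact absurd h' (hno G2 hG2)
      · exact Or.inr h'
    exact (no3cycle hG2.1 hstep h2 (Or.inr (hs.2 G2 hG2))
      hcv'.symm hvcne.symm hvv'.symm).elim
  · exact E.line_symm c v' h

lemma lineS_trans (hE : IsEssentialGraph G0 E) {v v' c : V}
    (hvc : E.line v c) (hne : ¬ StronglyEquiv G0 E v c)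
    (h : StronglyEquiv G0 E v v') : E.line v' c := by
  induction h with
  | refl => exact hvc
  | @tail w v' h1 h2 ih =>
    have hnew : ¬ StronglyEquiv G0 E w c := fun hq => hne (sequiv_trans h1 hq)
    have hcv' : c ≠ v' := by
      intro hcv
      exact hne (hcv ▸ Relation.ReflTransGen.tail h1 h2)
    exact lineS hE ih hnew h2 hcv'

lemma flag_base (hE : IsEssentialGraph G0 E) {a b c : V} (hab : E.arrow a b)
    (hbc : E.line b c) (hac : a ≠ c) (hnadj : ¬ E.adj a c)
    (hne : ¬ StronglyEquiv G0 E b c) : False := by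
  obtain ⟨⟨G1, hG1, h1⟩, ⟨G2, hG2, h2⟩⟩ := weak_of_line hE hbc hne
  have hnba : ∀ G ∈ AMPClass G0, ¬ G.arrow b a := ((hE.2.1 a b).1 hab).2
  have hadj2 : G2.adj a b := (mem_adj hE hG2).2 (Or.inl hab)
  have t2 : G2.triplex a b c := by
    refine ⟨hac, fun h => hnadj ((mem_adj hE hG2).1 h), ?_⟩
    rcases hadj2 with h | h | h
    · exact Or.inl ⟨h, h2⟩
    · exact absurd h (hnba G2 hG2)
    · exact Or.inr (Or.inr ⟨h, h2⟩)
  exact arrow_no_triplex h1 ((mem_triplex hG2 hG1).1 t2)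

lemma mod_cases {n x : ℕ} (hn : 0 < n) (hx : x < 2 * n) :
    x % n = x ∧ x < n ∨ x % n = x - n ∧ n ≤ x := by
  rcases lt_or_ge x n with h | h
  · exact Or.inl ⟨Nat.mod_eq_of_lt h, h⟩
  · refine Or.inr ⟨?_, h⟩
    rw [Nat.mod_eq_sub_mod h, Nat.mod_eq_of_lt (by omega)]

end Aux

/-- Lemma 3.9(a): the reduced graph of the essential graph over strong-equivalence
classes has no flags and no chordless undirected cycles of length ≥ 4. -/
theorem stmt11 {V : Type} (G0 E : MixedGraph V) (h0 : G0.IsChainGraph)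
    (hE : IsEssentialGraph G0 E) :
    (¬ ∃ x y z : V, ¬ StronglyEquiv G0 E x y ∧ ¬ StronglyEquiv G0 E y z ∧
      ¬ StronglyEquiv G0 E x z ∧ RArrow G0 E x y ∧ RLine G0 E y z ∧ ¬ RAdj G0 E x z) ∧
    (¬ ∃ (n : ℕ) (v : ℕ → V), 4 ≤ n ∧
      (∀ i, i < n → ∀ j, j < n → i ≠ j → ¬ StronglyEquiv G0 E (v i) (v j)) ∧
      (∀ i, i < n → RLine G0 E (v i) (v ((i + 1) % n))) ∧
      (∀ i, i < n → ∀ j, j < n → i ≠ j → (i + 1) % n ≠ j → (j + 1) % n ≠ i →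
        ¬ RAdj G0 E (v i) (v j))) := by
  constructor
  · rintro ⟨x, y, z, hxy, hyz, hxz, ⟨a, b, hxa, hyb, hab⟩, ⟨-, b', c, hyb', hzc, hl⟩, hnadj⟩
    have hneb'c : ¬ StronglyEquiv G0 E b' c := fun h =>
      hyz (sequiv_trans hyb' (sequiv_trans h (sequiv_symm hzc)))
    have hbb : StronglyEquiv G0 E b' b := sequiv_trans (sequiv_symm hyb') hyb
    have hbc : E.line b c := lineS_trans hE hl hneb'c hbb
    have hnebc : ¬ StronglyEquiv G0 E b c := fun h =>
      hyz (sequiv_trans hyb (sequiv_trans h (sequiv_symm hzc)))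
    have hac : a ≠ c := by
      intro h
      subst h
      exact hxz (sequiv_trans hxa (sequiv_symm hzc))
    have hnadjac : ¬ E.adj a c := by
      rintro (h | h | h)
      · exact hnadj (Or.inl ⟨a, c, hxa, hzc, h⟩)
      · exact hnadj (Or.inr (Or.inl ⟨c, a, hzc, hxa, h⟩))
      · exact hnadj (Or.inr (Or.inr ⟨hxz, a, c, hxa, hzc, h⟩))
    exact flag_base hE hab hbc hac hnadjac hnebc
  · rintro ⟨n, w, hn, hdist, hline, hchord⟩
    have hn0 : 0 < n := by omega
    -- choose representatives for each line of the cycle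
    have hex : ∀ i, i < n → ∃ p, StronglyEquiv G0 E (w i) p ∧
        ∃ q, StronglyEquiv G0 E (w ((i + 1) % n)) q ∧ E.line p q := by
      intro i hi
      obtain ⟨-, p, q, h1, h2, h3⟩ := hline i hi
      exact ⟨p, h1, q, h2, h3⟩
    classical
    set a : ℕ → V := fun i => if h : i < n then (hex i h).choose else w 0 with ha
    have haeq : ∀ i (h : i < n), StronglyEquiv G0 E (w i) (a i) := by
      intro i h
      simp only [ha, dif_pos h]
      exact (hex i h).choose_spec.1
    have hmodlt : ∀ i, i < n → (i + 1) % n < n := fun i _ => Nat.mod_lt _ hn0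
    have hmodne : ∀ i, i < n → (i + 1) % n ≠ i := by
      intro i hi
      rcases mod_cases hn0 (show i + 1 < 2 * n by omega) with ⟨h, h2⟩ | ⟨h, h2⟩ <;> omega
    -- normalized lines of the cycle
    have line_i : ∀ i (h : i < n), E.line (a i) (a ((i + 1) % n)) := by
      intro i hi
      simp only [ha, dif_pos hi]
      obtain ⟨h1, q, h2, h3⟩ := (hex i hi).choose_spec
      have hneq : ¬ StronglyEquiv G0 E q (hex i hi).choose := by
        intro h
        exact hdist ((i + 1) % n) (hmodlt i hi) i hi (hmodne i hi)
          (sequiv_trans h2 (sequiv_trans h (sequiv_symm (hex i hi).choose_spec.1)))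
      have := lineS_trans hE (E.line_symm _ _ h3) hneq
        (sequiv_trans (sequiv_symm h2) (haeq _ (hmodlt i hi)))
      exact E.line_symm _ _ this
    have adist : ∀ i, i < n → ∀ j, j < n → i ≠ j → a i ≠ a j := by
      intro i hi j hj hij h
      exact hdist i hi j hj hij (sequiv_trans (haeq i hi) (h ▸ sequiv_symm (haeq j hj)))
    have anadj : ∀ i, i < n → ∀ j, j < n → i ≠ j → (i + 1) % n ≠ j → (j + 1) % n ≠ i →
        ¬ E.adj (a i) (a j) := by
      intro i hi j hj h1 h2 h3 hadj
      apply hchord i hi j hj h1 h2 h3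
      rcases hadj with h | h | h
      · exact Or.inl ⟨a i, a j, haeq i hi, haeq j hj, h⟩
      · exact Or.inr (Or.inl ⟨a j, a i, haeq j hj, haeq i hi, h⟩)
      · exact Or.inr (Or.inr ⟨hdist i hi j hj h1, a i, a j, haeq i hi, haeq j hj, h⟩)
    have anequiv : ∀ i, i < n → ∀ j, j < n → i ≠ j →
        ¬ StronglyEquiv G0 E (a i) (a j) := by
      intro i hi j hj hij h
      exact hdist i hi j hj hij (sequiv_trans (haeq i hi) (sequiv_trans h (sequiv_symm (haeq j hj))))
    have h1n : (0 + 1) % n = 1 := Nat.mod_eq_of_lt (by omega)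
    -- a member orienting the first line
    obtain ⟨⟨G1, hG1, hG1a⟩, -⟩ := weak_of_line hE (line_i 0 hn0)
      (anequiv 0 hn0 ((0 + 1) % n) (hmodlt 0 hn0) (Ne.symm (hmodne 0 hn0)))
    -- propagate the orientation around the cycle
    have main : ∀ i, i < n → G1.arrow (a i) (a ((i + 1) % n)) := by
      intro i
      induction i with
      | zero => intro _; exact hG1a
      | succ i ih =>
        intro hi1
        have hi : i < n := by omega
        have prev := ih hi
        have e1 : (i + 1) % n = i + 1 := Nat.mod_eq_of_lt hi1
        rw [e1] at prev
        have lnext := line_i (i + 1) hi1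
        set j := (i + 1 + 1) % n with hj'
        have hj : j < n := hmodlt (i + 1) hi1
        have hjv : j = i + 2 ∨ (j = 0 ∧ i + 2 = n) := by
          rcases mod_cases hn0 (show i + 1 + 1 < 2 * n by omega) with ⟨h, h2⟩ | ⟨h, h2⟩ <;> omega
        have hij : i ≠ j := by omega
        have hc1 : (i + 1) % n ≠ j := by rw [e1]; omega
        have hc2 : (j + 1) % n ≠ i := by
          rcases mod_cases hn0 (show j + 1 < 2 * n by omega) with ⟨h, h2⟩ | ⟨h, h2⟩ <;> omega
        have hnadj := anadj i hi j hj hij hc1 hc2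
        have hane : a i ≠ a j := adist i hi j hj hij
        -- the opposite orientation of line i exists in some member
        obtain ⟨-, ⟨Gb, hGb, hb⟩⟩ := weak_of_line hE (line_i i hi)
          (anequiv i hi ((i + 1) % n) (hmodlt i hi) (Ne.symm (hmodne i hi)))
        rw [e1] at hb
        -- the triplex (a i, a j; a (i+1)) holds in no member
        have hnt : ¬ G1.triplex (a i) (a (i + 1)) (a j) := by
          intro ht
          exact arrow_no_triplex' hb ((mem_triplex hG1 hGb).1 ht)
        have hadjG1 : G1.adj (a (i + 1)) (a j) :=
          (mem_adj hE hG1).2 (Or.inr (Or.inr lnext))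
        rcases hadjG1 with h | h | h
        · exact h
        · exact absurd ⟨hane, fun hh => hnadj ((mem_adj hE hG1).1 hh), Or.inl ⟨prev, h⟩⟩ hnt
        · exact absurd ⟨hane, fun hh => hnadj ((mem_adj hE hG1).1 hh),
            Or.inr (Or.inl ⟨prev, h⟩)⟩ hnt
    -- assemble a semidirected cycle in the chain graph G1
    apply hG1.1 n (fun i => a (i % n))
    refine ⟨by omega, by simp [Nat.mod_self], ?_, ⟨0, hn0, ?_⟩, ?_⟩
    · intro i hi
      show G1.step (a (i % n)) (a ((i + 1) % n))
      rw [Nat.mod_eq_of_lt hi]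
      exact Or.inl (main i hi)
    · show G1.arrow (a (0 % n)) (a ((0 + 1) % n))
      rw [Nat.zero_mod]
      exact hG1a
    · intro i j hij hj
      show a (i % n) ≠ a (j % n)
      rw [Nat.mod_eq_of_lt (by omega : i < n), Nat.mod_eq_of_lt hj]
      exact adist i (by omega) j hj (by omega)
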